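/- Let U and W be irreducible T-modules. A linear map σ : U → W is an isomorphism of Q-modules if and only if σ is a quasi-isomorphism of T-modules, i.e., a linear bijection satisfying σL = Lσ, σF = Fσ, σR = Rσ on U, and σ E*_i = E*_{i+n} σ for all i ∈ ℤ, where n = r(W) − r(U). -/

import Mathlib

open Matrix BigOperators

noncomputable section

variable {X : Type*} [Fintype X] [DecidableEq X]

/-- The adjacency matrix of a graph, over ℂ. -/
def adjMat (G : SimpleGraph X) [DecidableRel G.Adj] : Matrix X X ℂ :=
  Matrix.of fun y z => if G.Adj y z then 1 else 0

/-- The dual idempotent `E*_i`: diagonal 0-1 matrix projecting onto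
vertices at distance `i` from `x` (zero for `i` outside the distance range). -/
def Estar (G : SimpleGraph X) (x : X) (i : ℤ) : Matrix X X ℂ :=
  Matrix.diagonal fun y => if (G.dist x y : ℤ) = i then 1 else 0

/-- The lowering matrix `L = Σ_{i=1}^D E*_{i-1} A E*_i`. -/
def lowerM (G : SimpleGraph X) [DecidableRel G.Adj] (x : X) (D : ℕ) : Matrix X X ℂ :=
  ∑ i ∈ Finset.Icc 1 D, Estar G x ((i : ℤ) - 1) * adjMat G * Estar G x i

/-- The flat matrix `F = Σ_{i=0}^D E*_i A E*_i`. -/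
def flatM (G : SimpleGraph X) [DecidableRel G.Adj] (x : X) (D : ℕ) : Matrix X X ℂ :=
  ∑ i ∈ Finset.range (D + 1), Estar G x i * adjMat G * Estar G x i

/-- The raising matrix `R = Σ_{i=0}^{D-1} E*_{i+1} A E*_i`. -/
def raiseM (G : SimpleGraph X) [DecidableRel G.Adj] (x : X) (D : ℕ) : Matrix X X ℂ :=
  ∑ i ∈ Finset.range D, Estar G x ((i : ℤ) + 1) * adjMat G * Estar G x i

/-- The subconstituent (Terwilliger) algebra `T`, generated by `A` and the `E*_i`. -/
def Talg (G : SimpleGraph X) [DecidableRel G.Adj] (x : X) (D : ℕ) :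
    Subalgebra ℂ (Matrix X X ℂ) :=
  Algebra.adjoin ℂ (insert (adjMat G) (Estar G x '' Set.Icc (0 : ℤ) (D : ℤ)))

/-- The quantum adjacency algebra `Q`, generated by `L, F, R`. -/
def Qalg (G : SimpleGraph X) [DecidableRel G.Adj] (x : X) (D : ℕ) :
    Subalgebra ℂ (Matrix X X ℂ) :=
  Algebra.adjoin ℂ {lowerM G x D, flatM G x D, raiseM G x D}

/-- The dual adjacency algebra `M*`, the span of the `E*_i`. -/
def Mstar (G : SimpleGraph X) (x : X) (D : ℕ) : Submodule ℂ (Matrix X X ℂ) :=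
  Submodule.span ℂ (Estar G x '' Set.Icc (0 : ℤ) (D : ℤ))

/-- The graded component `T_n = Σ_i E*_{i+n} T E*_i`. -/
def Tgraded (G : SimpleGraph X) [DecidableRel G.Adj] (x : X) (D : ℕ) (n : ℤ) :
    Submodule ℂ (Matrix X X ℂ) :=
  Submodule.span ℂ
    {M | ∃ i : ℤ, ∃ S ∈ Talg G x D, M = Estar G x (i + n) * S * Estar G x i}

/-- The graded component `Q_n = Q ∩ T_n`. -/
def Qgraded (G : SimpleGraph X) [DecidableRel G.Adj] (x : X) (D : ℕ) (n : ℤ) :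
    Submodule ℂ (Matrix X X ℂ) :=
  (Subalgebra.toSubmodule (Qalg G x D)) ⊓ Tgraded G x D n

/-- `W` is an irreducible module for the algebra `A₀ ⊆ Mat_X(ℂ)` (acting on `V = ℂ^X`
by matrix-vector multiplication). -/
def IsIrredMod (A₀ : Subalgebra ℂ (Matrix X X ℂ)) (W : Submodule ℂ (X → ℂ)) : Prop :=
  (∀ S ∈ A₀, ∀ w ∈ W, S.mulVec w ∈ W) ∧ W ≠ ⊥ ∧
    ∀ W' : Submodule ℂ (X → ℂ), W' ≤ W →
      (∀ S ∈ A₀, ∀ w ∈ W', S.mulVec w ∈ W') → W' = ⊥ ∨ W' = W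

/-- The subspace `E*_i W`. -/
def Emap (G : SimpleGraph X) (x : X) (i : ℤ) (W : Submodule ℂ (X → ℂ)) :
    Submodule ℂ (X → ℂ) :=
  W.map (Estar G x i).mulVecLin

/-- The subspace `P · W` spanned by all `S w`, `S ∈ P`, `w ∈ W`. -/
def actSp (P : Submodule ℂ (Matrix X X ℂ)) (W : Submodule ℂ (X → ℂ)) :
    Submodule ℂ (X → ℂ) :=
  Submodule.span ℂ {v | ∃ S ∈ P, ∃ w ∈ W, v = S.mulVec w}

/-- The statement: `W` has endpoint `r` and diameter `d`, i.e. `E*_i W ≠ 0`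
iff `r ≤ i ≤ r + d`. -/
def HasEndpointDiam (G : SimpleGraph X) (x : X) (W : Submodule ℂ (X → ℂ))
    (r d : ℕ) : Prop :=
  ∀ i : ℤ, Emap G x i W ≠ ⊥ ↔ ((r : ℤ) ≤ i ∧ i ≤ (r : ℤ) + (d : ℤ))

/-- `σ` restricts to an isomorphism of `Q`-modules from `U` to `W`. -/
def IsQIso (G : SimpleGraph X) [DecidableRel G.Adj] (x : X) (D : ℕ)
    (U W : Submodule ℂ (X → ℂ)) (σ : (X → ℂ) →ₗ[ℂ] (X → ℂ)) : Prop :=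
  U.map σ = W ∧ (∀ u ∈ U, σ u = 0 → u = 0) ∧
    ∀ S ∈ Qalg G x D, ∀ u ∈ U, σ (S.mulVec u) = S.mulVec (σ u)

/-- `σ` restricts to an isomorphism of `T`-modules from `U` to `W`. -/
def IsTIso (G : SimpleGraph X) [DecidableRel G.Adj] (x : X) (D : ℕ)
    (U W : Submodule ℂ (X → ℂ)) (σ : (X → ℂ) →ₗ[ℂ] (X → ℂ)) : Prop :=
  U.map σ = W ∧ (∀ u ∈ U, σ u = 0 → u = 0) ∧
    ∀ S ∈ Talg G x D, ∀ u ∈ U, σ (S.mulVec u) = S.mulVec (σ u)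

/-- `σ` restricts to a quasi-isomorphism of `T`-modules from `U` to `W`,
with endpoint shift `n`. -/
def IsQuasiIso (G : SimpleGraph X) [DecidableRel G.Adj] (x : X) (D : ℕ)
    (U W : Submodule ℂ (X → ℂ)) (σ : (X → ℂ) →ₗ[ℂ] (X → ℂ)) (n : ℤ) : Prop :=
  U.map σ = W ∧ (∀ u ∈ U, σ u = 0 → u = 0) ∧
    (∀ u ∈ U, σ ((lowerM G x D).mulVec u) = (lowerM G x D).mulVec (σ u)) ∧
    (∀ u ∈ U, σ ((flatM G x D).mulVec u) = (flatM G x D).mulVec (σ u)) ∧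
    (∀ u ∈ U, σ ((raiseM G x D).mulVec u) = (raiseM G x D).mulVec (σ u)) ∧
    ∀ i : ℤ, ∀ u ∈ U, σ ((Estar G x i).mulVec u) = (Estar G x (i + n)).mulVec (σ u)

end

noncomputable section Helpers

open Matrix BigOperators Finset

variable {X : Type*} [Fintype X] [DecidableEq X]

lemma Estar_mul_Estar (G : SimpleGraph X) (x : X) (i j : ℤ) :
    Estar G x i * Estar G x j = if i = j then Estar G x i else 0 := by
  ext y z
  rw [Matrix.mul_apply]
  by_cases h : i = j
  · subst h
    simp only [if_pos rfl, Estar, Matrix.diagonal_apply]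
    rw [Finset.sum_eq_single y]
    · by_cases h2 : y = z
      · subst h2; by_cases h1 : (G.dist x y : ℤ) = i <;> simp [h1]
      · by_cases h1 : (G.dist x y : ℤ) = i <;> simp [h1, h2]
    · intro b _ hb; simp [Ne.symm hb]
    · intro hy; exact absurd (Finset.mem_univ y) hy
  · simp only [if_neg h, Estar, Matrix.diagonal_apply, Matrix.zero_apply]
    apply Finset.sum_eq_zero
    intro b _
    by_cases h1 : y = b <;> by_cases h2 : (G.dist x b : ℤ) = i <;>
      by_cases h3 : (G.dist x b : ℤ) = j <;> simp [h1, h2, h3] <;> (intro _ hh; omega)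

lemma Estar_out (G : SimpleGraph X) (x : X) (D : ℕ) (hD : ∀ y, G.dist x y ≤ D)
    (i : ℤ) (h : i < 0 ∨ (D : ℤ) < i) : Estar G x i = 0 := by
  ext y z
  have h2 := hD y
  have h3 : ¬ ((G.dist x y : ℤ) = i) := by omega
  simp [Estar, Matrix.diagonal_apply, h3]

lemma sum_Estar (G : SimpleGraph X) (x : X) (D : ℕ) (hD : ∀ y, G.dist x y ≤ D) :
    ∑ i ∈ Finset.range (D+1), Estar G x (i : ℤ) = 1 := by
  ext y z
  rw [Matrix.sum_apply]
  simp only [Estar, Matrix.diagonal_apply, Matrix.one_apply]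
  by_cases h : y = z
  · subst h
    simp only [if_pos rfl]
    rw [Finset.sum_eq_single (G.dist x y)]
    · simp
    · intro b _ hb
      have : ¬((G.dist x y : ℤ) = (b:ℤ)) := by
        exact_mod_cast fun hh => hb (by exact_mod_cast hh.symm)
      simp [this]
    · intro hy; exact absurd (Finset.mem_range.2 (Nat.lt_succ_of_le (hD y))) hy
  · simp [h]

lemma EAE_apply (G : SimpleGraph X) [DecidableRel G.Adj] (x : X) (a b : ℤ) (y z : X) :
    (Estar G x a * adjMat G * Estar G x b) y z =
      if (G.dist x y : ℤ) = a ∧ (G.dist x z : ℤ) = b then adjMat G y z else 0 := by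
  rw [Matrix.mul_apply]
  simp only [Estar, Matrix.mul_diagonal, Matrix.diagonal_mul]
  rw [Finset.sum_eq_single z]
  · by_cases h1 : (G.dist x y : ℤ) = a <;> by_cases h2 : (G.dist x z : ℤ) = b <;>
      simp [h1, h2, mul_comm]
  · intro c _ hc
    simp [Matrix.diagonal_apply, hc]
  · intro hz; exact absurd (Finset.mem_univ z) hz

lemma adj_eq_LFR (G : SimpleGraph X) [DecidableRel G.Adj] (hG : G.Connected) (x : X) (D : ℕ)
    (hD : ∀ y, G.dist x y ≤ D) :
    adjMat G = lowerM G x D + flatM G x D + raiseM G x D := by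
  ext y z
  simp only [Matrix.add_apply, lowerM, flatM, raiseM, Matrix.sum_apply, EAE_apply]
  by_cases hyz : G.Adj y z
  · have hA : adjMat G y z = 1 := by simp [adjMat, hyz]
    have hd1 : G.dist y z = 1 := SimpleGraph.dist_eq_one_iff_adj.2 hyz
    have hd2 : G.dist z y = 1 := SimpleGraph.dist_eq_one_iff_adj.2 hyz.symm
    have t1 : G.dist x z ≤ G.dist x y + 1 := by
      have := hG.dist_triangle (u := x) (v := y) (w := z); omega
    have t2 : G.dist x y ≤ G.dist x z + 1 := by
      have := hG.dist_triangle (u := x) (v := z) (w := y); omega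
    have hy := hD y; have hz := hD z
    set a := G.dist x y with ha
    set b := G.dist x z with hb
    clear_value a b
    rw [hA]
    have e1 : ∑ i ∈ Finset.Icc 1 D, (if (a : ℤ) = (i:ℤ) - 1 ∧ (b:ℤ) = (i:ℤ) then (1:ℂ) else 0)
        = if b ∈ Finset.Icc 1 D then (if (a:ℤ) = (b:ℤ) - 1 then (1:ℂ) else 0) else 0 := by
      rw [← Finset.sum_ite_eq' (Finset.Icc 1 D) b (fun i => if (a:ℤ) = (i:ℤ) - 1 then (1:ℂ) else 0)]
      apply Finset.sum_congr rfl
      intro i _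
      by_cases h1 : i = b <;> by_cases h2 : (a:ℤ) = (i:ℤ)-1 <;> simp [h1, h2] <;> omega
    have e2 : ∑ i ∈ Finset.range (D+1), (if (a : ℤ) = (i:ℤ) ∧ (b:ℤ) = (i:ℤ) then (1:ℂ) else 0)
        = if b ∈ Finset.range (D+1) then (if (a:ℤ) = (b:ℤ) then (1:ℂ) else 0) else 0 := by
      rw [← Finset.sum_ite_eq' (Finset.range (D+1)) b (fun i => if (a:ℤ) = (i:ℤ) then (1:ℂ) else 0)]
      apply Finset.sum_congr rfl
      intro i _
      by_cases h1 : i = b <;> by_cases h2 : (a:ℤ) = (i:ℤ) <;> simp [h1, h2] <;> omega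
    have e3 : ∑ i ∈ Finset.range D, (if (a : ℤ) = (i:ℤ) + 1 ∧ (b:ℤ) = (i:ℤ) then (1:ℂ) else 0)
        = if b ∈ Finset.range D then (if (a:ℤ) = (b:ℤ) + 1 then (1:ℂ) else 0) else 0 := by
      rw [← Finset.sum_ite_eq' (Finset.range D) b (fun i => if (a:ℤ) = (i:ℤ) + 1 then (1:ℂ) else 0)]
      apply Finset.sum_congr rfl
      intro i _
      by_cases h1 : i = b <;> by_cases h2 : (a:ℤ) = (i:ℤ)+1 <;> simp [h1, h2] <;> omega
    rw [e1, e2, e3]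
    simp only [Finset.mem_Icc, Finset.mem_range]
    split_ifs <;> (try (exfalso; omega)) <;> norm_num
  · simp [adjMat, hyz]

lemma mulVec_sum' {ι : Type*} (s : Finset ι) (M : Matrix X X ℂ) (g : ι → X → ℂ) :
    M *ᵥ (∑ i ∈ s, g i) = ∑ i ∈ s, M *ᵥ (g i) := by
  have h := map_sum M.mulVecLin g s
  simpa only [Matrix.mulVecLin_apply] using h

lemma sum_mulVec' {ι : Type*} (s : Finset ι) (f : ι → Matrix X X ℂ) (v : X → ℂ) :
    (∑ i ∈ s, f i) *ᵥ v = ∑ i ∈ s, (f i) *ᵥ v :=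
  map_sum (Matrix.mulVec.addMonoidHomLeft v) f s


section Graph
variable (G : SimpleGraph X) [DecidableRel G.Adj] (x : X) (D : ℕ)

lemma Estar_mem_Talg (hD : ∀ y, G.dist x y ≤ D) (i : ℤ) : Estar G x i ∈ Talg G x D := by
  by_cases h : 0 ≤ i ∧ i ≤ (D:ℤ)
  · exact Algebra.subset_adjoin (Set.mem_insert_of_mem _ ⟨i, ⟨h.1, h.2⟩, rfl⟩)
  · rw [Estar_out G x D hD i (by omega)]
    exact Subalgebra.zero_mem _

lemma adj_mem_Talg : adjMat G ∈ Talg G x D :=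
  Algebra.subset_adjoin (Set.mem_insert _ _)

lemma lowerM_mem_Talg (hD : ∀ y, G.dist x y ≤ D) : lowerM G x D ∈ Talg G x D := by
  rw [lowerM]
  exact sum_mem fun i _ => mul_mem (mul_mem (Estar_mem_Talg G x D hD _)
    (adj_mem_Talg G x D)) (Estar_mem_Talg G x D hD _)

lemma flatM_mem_Talg (hD : ∀ y, G.dist x y ≤ D) : flatM G x D ∈ Talg G x D := by
  rw [flatM]
  exact sum_mem fun i _ => mul_mem (mul_mem (Estar_mem_Talg G x D hD _)
    (adj_mem_Talg G x D)) (Estar_mem_Talg G x D hD _)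

lemma raiseM_mem_Talg (hD : ∀ y, G.dist x y ≤ D) : raiseM G x D ∈ Talg G x D := by
  rw [raiseM]
  exact sum_mem fun i _ => mul_mem (mul_mem (Estar_mem_Talg G x D hD _)
    (adj_mem_Talg G x D)) (Estar_mem_Talg G x D hD _)

lemma Qalg_le_Talg (hD : ∀ y, G.dist x y ≤ D) : Qalg G x D ≤ Talg G x D := by
  apply Algebra.adjoin_le
  rintro S (rfl | rfl | rfl)
  · exact lowerM_mem_Talg G x D hD
  · exact flatM_mem_Talg G x D hD
  · exact raiseM_mem_Talg G x D hD

lemma adj_mem_Qalg : adjMat G ∈ Qalg G x D → True := fun _ => trivial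

lemma lowerM_mem_Tgraded : lowerM G x D ∈ Tgraded G x D (-1) := by
  apply Submodule.sum_mem
  intro i _
  apply Submodule.subset_span
  exact ⟨(i:ℤ), adjMat G, adj_mem_Talg G x D, by ring_nf⟩

lemma flatM_mem_Tgraded : flatM G x D ∈ Tgraded G x D 0 := by
  apply Submodule.sum_mem
  intro i _
  apply Submodule.subset_span
  exact ⟨(i:ℤ), adjMat G, adj_mem_Talg G x D, by ring_nf⟩

lemma raiseM_mem_Tgraded : raiseM G x D ∈ Tgraded G x D 1 := by
  apply Submodule.sum_mem
  intro i _
  apply Submodule.subset_span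
  exact ⟨(i:ℤ), adjMat G, adj_mem_Talg G x D, by ring_nf⟩

lemma one_mem_Tgraded (hD : ∀ y, G.dist x y ≤ D) : (1 : Matrix X X ℂ) ∈ Tgraded G x D 0 := by
  rw [← sum_Estar G x D hD]
  apply Submodule.sum_mem
  intro i _
  apply Submodule.subset_span
  refine ⟨(i:ℤ), 1, Subalgebra.one_mem _, ?_⟩
  rw [mul_one, add_zero, Estar_mul_Estar, if_pos rfl]

lemma Tgraded_mul {m n : ℤ} (hD : ∀ y, G.dist x y ≤ D) {S S' : Matrix X X ℂ}
    (hS : S ∈ Tgraded G x D m) (hS' : S' ∈ Tgraded G x D n) :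
    S * S' ∈ Tgraded G x D (m + n) := by
  induction hS using Submodule.span_induction with
  | zero => rw [zero_mul]; exact Submodule.zero_mem _
  | add a b _ _ iha ihb => rw [add_mul]; exact Submodule.add_mem _ iha ihb
  | smul c a _ ih => rw [smul_mul_assoc]; exact Submodule.smul_mem _ _ ih
  | mem a ha =>
    obtain ⟨i, S1, hS1, rfl⟩ := ha
    induction hS' using Submodule.span_induction with
    | zero => rw [mul_zero]; exact Submodule.zero_mem _
    | add a b _ _ iha ihb => rw [mul_add]; exact Submodule.add_mem _ iha ihb
    | smul c a _ ih => rw [mul_smul_comm]; exact Submodule.smul_mem _ _ ih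
    | mem b hb =>
      obtain ⟨j, S2, hS2, rfl⟩ := hb
      by_cases hij : i = j + n
      · apply Submodule.subset_span
        refine ⟨j, S1 * Estar G x i * S2,
          mul_mem (mul_mem hS1 (Estar_mem_Talg G x D hD i)) hS2, ?_⟩
        have e : Estar G x i * Estar G x (j+n) = Estar G x i := by
          rw [Estar_mul_Estar, if_pos hij]
        have e2 : i + m = j + (m + n) := by omega
        rw [← e2]
        simp only [mul_assoc]
        congr 2
        rw [← mul_assoc, e]
      · have e : Estar G x i * Estar G x (j+n) = 0 := by
          rw [Estar_mul_Estar, if_neg hij]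
        have e0 : Estar G x i * (Estar G x (j+n) * (S2 * Estar G x j)) = 0 := by
          rw [← mul_assoc, e, zero_mul]
        simp only [mul_assoc, e0, mul_zero]
        exact Submodule.zero_mem _

lemma Tgraded_bot {n : ℤ} (hD : ∀ y, G.dist x y ≤ D) (hn : (D:ℤ) < |n|) :
    Tgraded G x D n = ⊥ := by
  have h' : (D:ℤ) < n ∨ n < -(D:ℤ) := by
    rcases abs_cases n with ⟨h1,h2⟩|⟨h1,h2⟩ <;> omega
  rw [eq_bot_iff, Tgraded]
  rw [Submodule.span_le]
  rintro M ⟨i, S, _, rfl⟩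
  simp only [SetLike.mem_coe, Submodule.mem_bot]
  by_cases hi : 0 ≤ i ∧ i ≤ (D:ℤ)
  · have : Estar G x (i + n) = 0 := Estar_out G x D hD _ (by omega)
    rw [this, zero_mul, zero_mul]
  · have : Estar G x i = 0 := Estar_out G x D hD _ (by omega)
    rw [this, mul_zero]

lemma Qgraded_mul {m n : ℤ} (hD : ∀ y, G.dist x y ≤ D) {S S' : Matrix X X ℂ}
    (hS : S ∈ Qgraded G x D m) (hS' : S' ∈ Qgraded G x D n) :
    S * S' ∈ Qgraded G x D (m + n) := by
  refine ⟨?_, Tgraded_mul G x D hD hS.2 hS'.2⟩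
  have h1 := hS.1; have h2 := hS'.1
  have h3 : S * S' ∈ Qalg G x D :=
    mul_mem (show S ∈ Qalg G x D from h1) (show S' ∈ Qalg G x D from h2)
  exact h3

lemma lowerM_mem_Qgraded : lowerM G x D ∈ Qgraded G x D (-1) :=
  ⟨Algebra.subset_adjoin (by left; rfl), lowerM_mem_Tgraded G x D⟩

lemma flatM_mem_Qgraded : flatM G x D ∈ Qgraded G x D 0 :=
  ⟨Algebra.subset_adjoin (by right; left; rfl), flatM_mem_Tgraded G x D⟩

lemma raiseM_mem_Qgraded : raiseM G x D ∈ Qgraded G x D 1 :=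
  ⟨Algebra.subset_adjoin (by right; right; rfl), raiseM_mem_Tgraded G x D⟩

lemma smul_one_mem_Qgraded (hD : ∀ y, G.dist x y ≤ D) (c : ℂ) :
    c • (1 : Matrix X X ℂ) ∈ Qgraded G x D 0 :=
  Submodule.smul_mem _ _ ⟨Subalgebra.one_mem _, one_mem_Tgraded G x D hD⟩

lemma Qalg_mem_iSup (hD : ∀ y, G.dist x y ≤ D) {S : Matrix X X ℂ} (hS : S ∈ Qalg G x D) :
    S ∈ ⨆ n : ℤ, Qgraded G x D n := by
  induction hS using Algebra.adjoin_induction with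
  | mem a ha =>
    rcases ha with rfl | rfl | rfl
    · exact Submodule.mem_iSup_of_mem (-1) (lowerM_mem_Qgraded G x D)
    · exact Submodule.mem_iSup_of_mem 0 (flatM_mem_Qgraded G x D)
    · exact Submodule.mem_iSup_of_mem 1 (raiseM_mem_Qgraded G x D)
  | algebraMap c =>
    rw [Algebra.algebraMap_eq_smul_one]
    exact Submodule.mem_iSup_of_mem 0 (smul_one_mem_Qgraded G x D hD c)
  | add a b _ _ iha ihb => exact add_mem iha ihb
  | mul a b _ _ iha ihb =>
    obtain ⟨fa, hfa, hsa⟩ := (Submodule.mem_iSup_iff_exists_finsupp _ _).1 iha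
    obtain ⟨fb, hfb, hsb⟩ := (Submodule.mem_iSup_iff_exists_finsupp _ _).1 ihb
    rw [← hsa, ← hsb, Finsupp.sum, Finsupp.sum, Finset.sum_mul_sum]
    apply Submodule.sum_mem
    intro m _
    apply Submodule.sum_mem
    intro n _
    exact Submodule.mem_iSup_of_mem (m + n) (Qgraded_mul G x D hD (hfa m) (hfb n))

lemma qdecomp (hD : ∀ y, G.dist x y ≤ D) {S : Matrix X X ℂ} (hS : S ∈ Qalg G x D) :
    ∃ f : ℤ →₀ Matrix X X ℂ, (∀ k, f k ∈ Qgraded G x D k) ∧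
      S = ∑ n ∈ f.support, f n := by
  obtain ⟨f, hf, hsum⟩ := (Submodule.mem_iSup_iff_exists_finsupp _ _).1
    (Qalg_mem_iSup G x D hD hS)
  exact ⟨f, hf, hsum.symm⟩

lemma Estar_mulVec_graded {n : ℤ} (hD : ∀ y, G.dist x y ≤ D) {S : Matrix X X ℂ}
    (hS : S ∈ Tgraded G x D n) {k : ℤ} {v : X → ℂ} (hv : (Estar G x k) *ᵥ v = v) (i : ℤ) :
    (Estar G x i) *ᵥ (S *ᵥ v) = if i = k + n then S *ᵥ v else 0 := by
  induction hS using Submodule.span_induction with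
  | zero => simp only [Matrix.zero_mulVec, Matrix.mulVec_zero, ite_self]
  | add a b _ _ iha ihb =>
    rw [Matrix.add_mulVec, Matrix.mulVec_add, iha, ihb]
    split_ifs <;> simp
  | smul c a _ ih =>
    rw [Matrix.smul_mulVec, Matrix.mulVec_smul, ih]
    split_ifs <;> simp
  | mem a ha =>
    obtain ⟨j, S1, _, rfl⟩ := ha
    have e1 : Estar G x j *ᵥ v = if j = k then v else 0 := by
      conv_lhs => rw [← hv]
      rw [Matrix.mulVec_mulVec, Estar_mul_Estar]
      split_ifs with h
      · rw [h, hv]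
      · rw [Matrix.zero_mulVec]
    have key : (Estar G x (j+n) * S1 * Estar G x j) *ᵥ v
        = if j = k then (Estar G x (j+n) * S1) *ᵥ v else 0 := by
      rw [← Matrix.mulVec_mulVec, e1]
      split_ifs with h
      · rfl
      · rw [Matrix.mulVec_zero]
    rw [key]
    by_cases hjk : j = k
    · simp only [if_pos hjk]
      rw [Matrix.mulVec_mulVec, ← mul_assoc, Estar_mul_Estar]
      by_cases h : i = j + n
      · rw [if_pos h, h, if_pos (by omega)]
      · rw [if_neg h, zero_mul, Matrix.zero_mulVec, if_neg (by omega)]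
    · simp only [if_neg hjk, Matrix.mulVec_zero, ite_self]

lemma Estar_mulVec_qdecomp (hD : ∀ y, G.dist x y ≤ D) (f : ℤ →₀ Matrix X X ℂ)
    (hf : ∀ k, f k ∈ Qgraded G x D k) {k : ℤ} {v : X → ℂ}
    (hv : (Estar G x k) *ᵥ v = v) (i : ℤ) :
    (Estar G x i) *ᵥ ((∑ n ∈ f.support, f n) *ᵥ v) = (f (i - k)) *ᵥ v := by
  rw [sum_mulVec', mulVec_sum']
  have hc : ∀ n ∈ f.support, Estar G x i *ᵥ ((f n) *ᵥ v) = if n = i - k then (f n) *ᵥ v else 0 := by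
    intro n _
    rw [Estar_mulVec_graded G x D hD (hf n).2 hv i]
    split_ifs with h1 h2 h2 <;> first | rfl | omega
  rw [Finset.sum_congr rfl hc, Finset.sum_ite_eq' f.support (i-k) (fun n => (f n) *ᵥ v)]
  split_ifs with h
  · rfl
  · rw [Finsupp.notMem_support_iff.1 h, Matrix.zero_mulVec]


lemma Estar_mulVec_idem (i : ℤ) (w : X → ℂ) :
    Estar G x i *ᵥ (Estar G x i *ᵥ w) = Estar G x i *ᵥ w := by
  rw [Matrix.mulVec_mulVec, Estar_mul_Estar, if_pos rfl]

lemma sum_Estar_mulVec (hD : ∀ y, G.dist x y ≤ D) (w : X → ℂ) :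
    ∑ m ∈ Finset.range (D+1), Estar G x (m:ℤ) *ᵥ w = w := by
  rw [← sum_mulVec', sum_Estar G x D hD, Matrix.one_mulVec]

lemma endpoint_le (hD : ∀ y, G.dist x y ≤ D) (V' : Submodule ℂ (X → ℂ)) (rr d : ℕ)
    (hr : HasEndpointDiam G x V' rr d) : (rr:ℤ) + d ≤ D := by
  by_contra h
  have h1 : Emap G x ((rr:ℤ)+d) V' ≠ ⊥ := (hr _).2 ⟨by omega, le_refl _⟩
  apply h1
  rw [Emap, Estar_out G x D hD _ (by omega), Matrix.mulVecLin_zero, Submodule.map_zero]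

def mulVecAt (v : X → ℂ) : Matrix X X ℂ →ₗ[ℂ] (X → ℂ) where
  toFun M := M *ᵥ v
  map_add' := fun a b => Matrix.add_mulVec a b v
  map_smul' := fun c a => Matrix.smul_mulVec c a v

lemma adj_mem_Qalg' (hG : G.Connected) (hD : ∀ y, G.dist x y ≤ D) :
    adjMat G ∈ Qalg G x D := by
  rw [adj_eq_LFR G hG x D hD]
  exact add_mem (add_mem (Algebra.subset_adjoin (by left; rfl))
    (Algebra.subset_adjoin (by right; left; rfl)))
    (Algebra.subset_adjoin (by right; right; rfl))

lemma Qact_eq (hG : G.Connected) (hD : ∀ y, G.dist x y ≤ D)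
    (V' : Submodule ℂ (X → ℂ)) (hV : IsIrredMod (Talg G x D) V')
    {v : X → ℂ} (hv : v ∈ V') (hv0 : v ≠ 0) {k : ℤ} (hk : Estar G x k *ᵥ v = v) :
    ∀ u ∈ V', ∃ q ∈ Qalg G x D, u = q *ᵥ v := by
  set Mv : Submodule ℂ (X → ℂ) :=
    Submodule.map (mulVecAt v) (Subalgebra.toSubmodule (Qalg G x D)) with hMv
  have hmem : ∀ w, w ∈ Mv ↔ ∃ q ∈ Qalg G x D, q *ᵥ v = w := by
    intro w
    constructor
    · rintro ⟨q, hq, rfl⟩; exact ⟨q, hq, rfl⟩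
    · rintro ⟨q, hq, rfl⟩; exact ⟨q, hq, rfl⟩
  have hle : Mv ≤ V' := by
    rintro _ ⟨q, hq, rfl⟩
    exact hV.1 q (Qalg_le_Talg G x D hD hq) v hv
  have hinv : ∀ S ∈ Talg G x D, ∀ w ∈ Mv, S *ᵥ w ∈ Mv := by
    intro S hS
    induction hS using Algebra.adjoin_induction with
    | mem a ha =>
      intro w hw
      obtain ⟨q, hq, rfl⟩ := (hmem w).1 hw
      rcases ha with rfl | ⟨i, _, rfl⟩
      · refine (hmem _).2 ⟨adjMat G * q, mul_mem (adj_mem_Qalg' G x D hG hD) hq, ?_⟩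
        rw [← Matrix.mulVec_mulVec]
      · obtain ⟨f, hf, rfl⟩ := qdecomp G x D hD hq
        rw [Estar_mulVec_qdecomp G x D hD f hf hk]
        exact (hmem _).2 ⟨f (i - k), (hf (i-k)).1, rfl⟩
    | algebraMap c =>
      intro w hw
      rw [Algebra.algebraMap_eq_smul_one, Matrix.smul_mulVec, Matrix.one_mulVec]
      exact Submodule.smul_mem _ _ hw
    | add a b _ _ iha ihb =>
      intro w hw
      rw [Matrix.add_mulVec]
      exact Submodule.add_mem _ (iha w hw) (ihb w hw)
    | mul a b _ _ iha ihb =>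
      intro w hw
      rw [← Matrix.mulVec_mulVec]
      exact iha _ (ihb w hw)
  have hne : Mv ≠ ⊥ := by
    rw [Submodule.ne_bot_iff]
    exact ⟨v, (hmem v).2 ⟨1, Subalgebra.one_mem _, Matrix.one_mulVec v⟩, hv0⟩
  rcases hV.2.2 Mv hle hinv with h | h
  · exact absurd h hne
  · intro u hu
    obtain ⟨q, hq, hqv⟩ := (hmem u).1 (h ▸ hu)
    exact ⟨q, hq, hqv.symm⟩

lemma Emap_ne_bot_iff (hG : G.Connected) (hD : ∀ y, G.dist x y ≤ D)
    (V' : Submodule ℂ (X → ℂ)) (hV : IsIrredMod (Talg G x D) V')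
    {v : X → ℂ} (hv : v ∈ V') (hv0 : v ≠ 0) {k : ℤ} (hk : Estar G x k *ᵥ v = v) (i : ℤ) :
    Emap G x i V' ≠ ⊥ ↔ ∃ q ∈ Qgraded G x D (i - k), q *ᵥ v ≠ 0 := by
  constructor
  · intro h
    obtain ⟨w', hw', hw'0⟩ := (Submodule.ne_bot_iff _).1 h
    obtain ⟨w, hw, rfl⟩ := hw'
    obtain ⟨q, hq, rfl⟩ := Qact_eq G x D hG hD V' hV hv hv0 hk w hw
    obtain ⟨f, hf, rfl⟩ := qdecomp G x D hD hq
    rw [Matrix.mulVecLin_apply, Estar_mulVec_qdecomp G x D hD f hf hk] at hw'0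
    exact ⟨f (i - k), hf (i-k), hw'0⟩
  · rintro ⟨q, hq, hq0⟩
    rw [Submodule.ne_bot_iff]
    refine ⟨Estar G x i *ᵥ (q *ᵥ v), ⟨q *ᵥ v,
      hV.1 q (Qalg_le_Talg G x D hD hq.1) v hv, rfl⟩, ?_⟩
    rw [Estar_mulVec_graded G x D hD hq.2 hk i, if_pos (by omega)]
    exact hq0

lemma core (hG : G.Connected) (hD : ∀ y, G.dist x y ≤ D)
    (U W : Submodule ℂ (X → ℂ))
    (hU : IsIrredMod (Talg G x D) U) (hW : IsIrredMod (Talg G x D) W)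
    (r dU r' dW : ℕ)
    (hrU : HasEndpointDiam G x U r dU) (hrW : HasEndpointDiam G x W r' dW)
    (σ : (X → ℂ) →ₗ[ℂ] (X → ℂ))
    (hmap : U.map σ = W) (hinj : ∀ u ∈ U, σ u = 0 → u = 0)
    (hcomm : ∀ S ∈ Qalg G x D, ∀ u ∈ U, σ (S.mulVec u) = S.mulVec (σ u))
    {u₀ : X → ℂ} (hu₀ : u₀ ∈ U) (h0 : u₀ ≠ 0) (hkr : Estar G x (r:ℤ) *ᵥ u₀ = u₀)
    (m : ℕ) (hm : m ≤ D) (hwm : Estar G x (m:ℤ) *ᵥ (σ u₀) ≠ 0) :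
    (m:ℤ) ≤ (r':ℤ) ∧ (r':ℤ) + (dW:ℤ) ≤ (m:ℤ) + (dU:ℤ) := by
  set w₀ := σ u₀ with hw₀
  have hw₀W : w₀ ∈ W := hmap ▸ Submodule.mem_map_of_mem hu₀
  set wm := Estar G x (m:ℤ) *ᵥ w₀ with hwmdef
  have hwmW : wm ∈ W := hW.1 _ (Estar_mem_Talg G x D hD _) _ hw₀W
  have hhom : Estar G x (m:ℤ) *ᵥ wm = wm := Estar_mulVec_idem G x _ _
  have transfer : ∀ (n : ℤ) (q : Matrix X X ℂ), q ∈ Qgraded G x D n →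
      q *ᵥ wm ≠ 0 → q *ᵥ u₀ ≠ 0 := by
    intro n q hq hqwm hqu
    apply hqwm
    have h1 : q *ᵥ w₀ = 0 := by
      rw [hw₀, ← hcomm q hq.1 u₀ hu₀, hqu, map_zero]
    have h2 : q *ᵥ wm = Estar G x ((m:ℤ)+n) *ᵥ (q *ᵥ w₀) := by
      conv_rhs => rw [← sum_Estar_mulVec G x D hD w₀]
      rw [mulVec_sum', mulVec_sum']
      have hc : ∀ m' ∈ Finset.range (D+1),
          Estar G x ((m:ℤ)+n) *ᵥ (q *ᵥ (Estar G x (m':ℤ) *ᵥ w₀))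
          = if m' = m then q *ᵥ (Estar G x (m':ℤ) *ᵥ w₀) else 0 := by
        intro m' _
        rw [Estar_mulVec_graded G x D hD hq.2 (Estar_mulVec_idem G x (m':ℤ) w₀) _]
        split_ifs with h1 h2 h2 <;> first | rfl | (exfalso; omega)
      rw [Finset.sum_congr rfl hc, Finset.sum_ite_eq' (Finset.range (D+1)) m
        (fun m' => q *ᵥ (Estar G x (m':ℤ) *ᵥ w₀)),
        if_pos (Finset.mem_range.2 (by omega))]
    rw [h2, h1, Matrix.mulVec_zero]
  have key : ∀ i : ℤ, (r':ℤ) ≤ i → i ≤ (r':ℤ)+(dW:ℤ) →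
      ((r:ℤ) ≤ (r:ℤ) + (i - m) ∧ (r:ℤ) + (i-m) ≤ (r:ℤ) + (dU:ℤ)) := by
    intro i h1 h2
    have hE : Emap G x i W ≠ ⊥ := (hrW i).2 ⟨h1, h2⟩
    obtain ⟨q, hq, hq0⟩ := (Emap_ne_bot_iff G x D hG hD W hW hwmW hwm hhom i).1 hE
    have hne : q *ᵥ u₀ ≠ 0 := transfer (i - m) q hq hq0
    have hE2 : Emap G x ((r:ℤ) + (i - m)) U ≠ ⊥ := by
      rw [Emap_ne_bot_iff G x D hG hD U hU hu₀ h0 hkr]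
      refine ⟨q, ?_, hne⟩
      have e : (r:ℤ) + (i - (m:ℤ)) - (r:ℤ) = i - (m:ℤ) := by ring
      rw [e]
      exact hq
    exact (hrU _).1 hE2
  constructor
  · have := key (r':ℤ) le_rfl (by omega); omega
  · have := key ((r':ℤ)+(dW:ℤ)) (by omega) le_rfl; omega

end Graph
end Helpers

theorem stmt17 {X : Type*} [Fintype X] [DecidableEq X]
    (G : SimpleGraph X) [DecidableRel G.Adj] (hG : G.Connected) (x : X) (D : ℕ)
    (hD : ∀ y, G.dist x y ≤ D) (hD2 : ∃ y, G.dist x y = D)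
    (U W : Submodule ℂ (X → ℂ))
    (hU : IsIrredMod (Talg G x D) U) (hW : IsIrredMod (Talg G x D) W)
    (r dU r' dW : ℕ)
    (hrU : HasEndpointDiam G x U r dU) (hrW : HasEndpointDiam G x W r' dW)
    (σ : (X → ℂ) →ₗ[ℂ] (X → ℂ)) :
    IsQIso G x D U W σ ↔ IsQuasiIso G x D U W σ ((r' : ℤ) - (r : ℤ)) := by
  constructor
  · rintro ⟨hmap, hinj, hcomm⟩
    have hrne : Emap G x (r:ℤ) U ≠ ⊥ := (hrU _).2 ⟨le_rfl, by omega⟩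
    obtain ⟨w', hw'mem, hw'0⟩ := (Submodule.ne_bot_iff _).1 hrne
    obtain ⟨u1, hu1, rfl⟩ := hw'mem
    rw [Matrix.mulVecLin_apply] at hw'0
    set u₀ := Estar G x (r:ℤ) *ᵥ u1 with hu₀def
    have hu₀U : u₀ ∈ U := hU.1 _ (Estar_mem_Talg G x D hD _) _ hu1
    have hu₀hom : Estar G x (r:ℤ) *ᵥ u₀ = u₀ := Estar_mulVec_idem G x _ _
    have hu₀0 : u₀ ≠ 0 := hw'0
    have comp : ∀ v : X → ℂ, v ≠ 0 → ∃ m : ℕ, m ≤ D ∧ Estar G x (m:ℤ) *ᵥ v ≠ 0 := by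
      intro v hv
      by_contra h
      push_neg at h
      apply hv
      rw [← sum_Estar_mulVec G x D hD v]
      apply Finset.sum_eq_zero
      intro m hm
      exact h m (by rw [Finset.mem_range] at hm; omega)
    have hσu₀ : σ u₀ ≠ 0 := fun h => hu₀0 (hinj u₀ hu₀U h)
    obtain ⟨m, hmD, hm0⟩ := comp (σ u₀) hσu₀
    have hdWdU := core G x D hG hD U W hU hW r dU r' dW hrU hrW σ hmap hinj hcomm
      hu₀U hu₀0 hu₀hom m hmD hm0
    -- construct the inverse map τ
    have hσW : ∀ u : U, σ (u:X→ℂ) ∈ W := fun u => hmap ▸ Submodule.mem_map_of_mem u.2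
    let f : U →ₗ[ℂ] W := (σ.domRestrict U).codRestrict W hσW
    have hfbij : Function.Bijective f := by
      constructor
      · intro a b hab
        have h1 : σ (a:X→ℂ) = σ (b:X→ℂ) := congrArg Subtype.val hab
        have h2 : σ ((a:X→ℂ) - b) = 0 := by rw [map_sub, h1, sub_self]
        have h3 : (a:X→ℂ) - b = 0 := hinj _ (Submodule.sub_mem U a.2 b.2) h2
        exact Subtype.ext (sub_eq_zero.1 h3)
      · rintro ⟨w, hw⟩
        rw [← hmap] at hw
        obtain ⟨u, hu, hσ⟩ := hw
        exact ⟨⟨u, hu⟩, Subtype.ext hσ⟩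
    let e : U ≃ₗ[ℂ] W := LinearEquiv.ofBijective f hfbij
    obtain ⟨W', hcompl⟩ := Submodule.exists_isCompl W
    let π : (X → ℂ) →ₗ[ℂ] W := W.linearProjOfIsCompl W' hcompl
    let τ : (X → ℂ) →ₗ[ℂ] (X → ℂ) := U.subtype ∘ₗ (e.symm : W →ₗ[ℂ] U) ∘ₗ π
    have hτσ : ∀ u ∈ U, τ (σ u) = u := by
      intro u hu
      show U.subtype (e.symm (π (σ u))) = u
      have h1 : π (σ u) = ⟨σ u, hσW ⟨u, hu⟩⟩ :=
        Submodule.linearProjOfIsCompl_apply_left hcompl ⟨σ u, hσW ⟨u, hu⟩⟩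
      have h2 : e.symm ⟨σ u, hσW ⟨u, hu⟩⟩ = ⟨u, hu⟩ := by
        rw [LinearEquiv.symm_apply_eq]
        rfl
      rw [h1, h2]
      rfl
    have hmapτ : W.map τ = U := by
      apply le_antisymm
      · rintro _ ⟨w, hw, rfl⟩
        rw [← hmap] at hw
        obtain ⟨u, hu, rfl⟩ := hw
        rw [hτσ u hu]; exact hu
      · intro u hu
        exact ⟨σ u, hmap ▸ Submodule.mem_map_of_mem hu, hτσ u hu⟩
    have hinjτ : ∀ w ∈ W, τ w = 0 → w = 0 := by
      intro w hw h
      rw [← hmap] at hw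
      obtain ⟨u, hu, rfl⟩ := hw
      rw [hτσ u hu] at h
      rw [h, map_zero]
    have hcommτ : ∀ S ∈ Qalg G x D, ∀ w ∈ W, τ (S.mulVec w) = S.mulVec (τ w) := by
      intro S hS w hw
      rw [← hmap] at hw
      obtain ⟨u, hu, rfl⟩ := hw
      rw [← hcomm S hS u hu, hτσ _ (hU.1 S (Qalg_le_Talg G x D hD hS) u hu), hτσ u hu]
    have hrne' : Emap G x (r':ℤ) W ≠ ⊥ := (hrW _).2 ⟨le_rfl, by omega⟩
    obtain ⟨v', hv'mem, hv'0⟩ := (Submodule.ne_bot_iff _).1 hrne'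
    obtain ⟨v1, hv1, rfl⟩ := hv'mem
    rw [Matrix.mulVecLin_apply] at hv'0
    set v₀ := Estar G x (r':ℤ) *ᵥ v1 with hv₀def
    have hv₀W : v₀ ∈ W := hW.1 _ (Estar_mem_Talg G x D hD _) _ hv1
    have hv₀hom : Estar G x (r':ℤ) *ᵥ v₀ = v₀ := Estar_mulVec_idem G x _ _
    have hτv₀ : τ v₀ ≠ 0 := fun h => hv'0 (hinjτ v₀ hv₀W h)
    obtain ⟨m', hm'D, hm'0⟩ := comp (τ v₀) hτv₀
    have hdUdW := core G x D hG hD W U hW hU r' dW r dU hrW hrU τ hmapτ hinjτ hcommτ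
      hv₀W hv'0 hv₀hom m' hm'D hm'0
    have hdeq : (dU:ℤ) = (dW:ℤ) := by omega
    have H : ∀ u, u ∈ U → Estar G x (r:ℤ) *ᵥ u = u →
        Estar G x (r':ℤ) *ᵥ (σ u) = σ u := by
      intro u hu hhom
      by_cases h0 : u = 0
      · rw [h0, map_zero, Matrix.mulVec_zero]
      · have hcomps : ∀ m'' : ℕ, m'' ≤ D → m'' ≠ r' →
            Estar G x (m'':ℤ) *ᵥ σ u = 0 := by
          intro m'' hm'' hne
          by_contra hc
          have := core G x D hG hD U W hU hW r dU r' dW hrU hrW σ hmap hinj hcomm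
            hu h0 hhom m'' hm'' hc
          omega
        have hr'D : (r':ℤ) + dW ≤ D := endpoint_le G x D hD W r' dW hrW
        have hsum : ∑ m'' ∈ Finset.range (D+1), Estar G x (m'':ℤ) *ᵥ σ u
            = Estar G x (r':ℤ) *ᵥ σ u := by
          rw [Finset.sum_eq_single r']
          · intro b hb hbne
            exact hcomps b (by rw [Finset.mem_range] at hb; omega) hbne
          · intro hr'
            exact absurd (Finset.mem_range.2 (by omega)) hr'
        rw [← hsum, sum_Estar_mulVec G x D hD]
    refine ⟨hmap, hinj,
      fun u hu => hcomm _ (Algebra.subset_adjoin (by left; rfl)) u hu,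
      fun u hu => hcomm _ (Algebra.subset_adjoin (by right; left; rfl)) u hu,
      fun u hu => hcomm _ (Algebra.subset_adjoin (by right; right; rfl)) u hu, ?_⟩
    intro i u hu
    have hw₀hom : Estar G x (r':ℤ) *ᵥ (σ u₀) = σ u₀ := H u₀ hu₀U hu₀hom
    obtain ⟨q, hq, rfl⟩ := Qact_eq G x D hG hD U hU hu₀U hu₀0 hu₀hom u hu
    obtain ⟨f, hf, rfl⟩ := qdecomp G x D hD hq
    have lhs : σ (Estar G x i *ᵥ ((∑ n ∈ f.support, f n) *ᵥ u₀))
        = f (i - (r:ℤ)) *ᵥ σ u₀ := by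
      rw [Estar_mulVec_qdecomp G x D hD f hf hu₀hom i,
        hcomm _ (hf (i-(r:ℤ))).1 u₀ hu₀U]
    have rhs : Estar G x (i + ((r':ℤ) - (r:ℤ))) *ᵥ σ ((∑ n ∈ f.support, f n) *ᵥ u₀)
        = f (i - (r:ℤ)) *ᵥ σ u₀ := by
      rw [hcomm _ hq u₀ hu₀U,
        Estar_mulVec_qdecomp G x D hD f hf hw₀hom (i + ((r':ℤ) - (r:ℤ)))]
      have e : i + ((r':ℤ) - (r:ℤ)) - (r':ℤ) = i - (r:ℤ) := by ring
      rw [e]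
    rw [lhs, rhs]
  · rintro ⟨hmap, hinj, hL, hF, hR, hE⟩
    refine ⟨hmap, hinj, ?_⟩
    intro S hS
    induction hS using Algebra.adjoin_induction with
    | mem a ha =>
      rcases ha with rfl | rfl | rfl
      · exact hL
      · exact hF
      · exact hR
    | algebraMap c =>
      intro u hu
      rw [Algebra.algebraMap_eq_smul_one, Matrix.smul_mulVec, Matrix.one_mulVec,
        σ.map_smul, Matrix.smul_mulVec, Matrix.one_mulVec]
    | add a b _ _ iha ihb =>
      intro u hu
      rw [Matrix.add_mulVec, map_add, iha u hu, ihb u hu, Matrix.add_mulVec]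
    | mul a b ha hb iha ihb =>
      intro u hu
      rw [← Matrix.mulVec_mulVec, iha _ (hU.1 b (Qalg_le_Talg G x D hD hb) u hu),
        ihb u hu, Matrix.mulVec_mulVec]
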